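/- For any finite Abelian group G and positive integer j, D_{j+1}(G) ≤ min over positive integers i of max{ D_j(G) + i , s_{≤i}(G) − 1 }. -/

import Mathlib

def jDavenportSet (G : Type*) [AddCommGroup G] (j : ℕ) : Set ℕ :=
  {ℓ | ∀ S : Multiset G, ℓ ≤ Multiset.card S →
    ∃ L : List (Multiset G), L.length = j ∧ L.sum ≤ S ∧ ∀ T ∈ L, T ≠ 0 ∧ T.sum = 0}

/-- Defining set for `s_{≤ i}(G)` in `ℕ∞`: thresholds `ℓ` such that every sequence of
length at least `ℓ` has a non-empty zero-sum subsequence of length at most `i`. -/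
def shortZeroSumSet (G : Type*) [AddCommGroup G] (i : ℕ) : Set ℕ∞ :=
  {ℓ | ∀ S : Multiset G, ℓ ≤ (Multiset.card S : ℕ∞) →
    ∃ T ≤ S, T ≠ 0 ∧ T.sum = 0 ∧ Multiset.card T ≤ i}

private lemma aux_list_sum_sum_eq_zero {G : Type*} [AddCommGroup G] :
    ∀ (L : List (Multiset G)), (∀ T ∈ L, Multiset.sum T = 0) → (L.sum).sum = 0
  | [], _ => by simp
  | (T :: L), h => by
      simp only [List.sum_cons, Multiset.sum_add]
      rw [h T (by simp), aux_list_sum_sum_eq_zero L (fun U hU => h U (by simp [hU]))]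
      simp

theorem stmt5 (G : Type*) [AddCommGroup G] [Fintype G] (j : ℕ) (hj : 0 < j)
    (Dj Dj1 : ℕ) (hDj : IsLeast (jDavenportSet G j) Dj)
    (hDj1 : IsLeast (jDavenportSet G (j + 1)) Dj1)
    (s : ℕ → ℕ∞) (hs : ∀ i, IsLeast (shortZeroSumSet G i) (s i)) :
    ∀ i : ℕ, 0 < i → (Dj1 : ℕ∞) ≤ max ((Dj : ℕ∞) + i) (s i - 1) := by
  classical
  have hDjmem := hDj.1
  intro i hi
  -- finishing move when we have a short zero-sum T ≤ S
  have finish1 : ∀ S T : Multiset G, T ≤ S → T ≠ 0 → T.sum = 0 →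
      Multiset.card T ≤ i → Dj + i ≤ Multiset.card S →
      ∃ L : List (Multiset G), L.length = j + 1 ∧ L.sum ≤ S ∧ ∀ U ∈ L, U ≠ 0 ∧ U.sum = 0 := by
    intro S T hTS hT0 hTsum hTcard hcard
    have hsplit : (S - T) + T = S := tsub_add_cancel_of_le hTS
    have hcs : Multiset.card (S - T) + Multiset.card T = Multiset.card S := by
      have := congrArg Multiset.card hsplit
      rwa [Multiset.card_add] at this
    have hDjle : Dj ≤ Multiset.card (S - T) := by omega
    obtain ⟨L, hLlen, hLsum, hLmem⟩ := hDjmem (S - T) hDjle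
    refine ⟨T :: L, by simp [hLlen], ?_, ?_⟩
    · have h1 : L.sum + T ≤ (S - T) + T := add_le_add_left hLsum T
      rw [hsplit] at h1
      simpa [List.sum_cons, add_comm] using h1
    · intro U hU
      rcases List.mem_cons.mp hU with h | h
      · subst h; exact ⟨hT0, hTsum⟩
      · exact hLmem U h
  -- key lemma: membership-style statement with natural-number hypotheses on card S
  have key : ∀ S : Multiset G, Dj + i ≤ Multiset.card S →
      s i - 1 ≤ (Multiset.card S : ℕ∞) →
      ∃ L : List (Multiset G), L.length = j + 1 ∧ L.sum ≤ S ∧ ∀ U ∈ L, U ≠ 0 ∧ U.sum = 0 := by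
    intro S hcard hcard2
    by_cases h1 : s i ≤ (Multiset.card S : ℕ∞)
    · obtain ⟨T, hTS, hT0, hTsum, hTcard⟩ := (hs i).1 S h1
      exact finish1 S T hTS hT0 hTsum hTcard hcard
    · -- append g := -S.sum
      have h2 : s i ≤ (Multiset.card S : ℕ∞) + 1 := tsub_le_iff_right.mp hcard2
      set g : G := -S.sum with hg_def
      have hcardS' : s i ≤ (Multiset.card (g ::ₘ S) : ℕ∞) := by
        rw [Multiset.card_cons]
        push_cast
        exact h2
      obtain ⟨T, hTS', hT0, hTsum, hTcard⟩ := (hs i).1 (g ::ₘ S) hcardS'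
      by_cases hTS : T ≤ S
      · exact finish1 S T hTS hT0 hTsum hTcard hcard
      · have hg : g ∈ T := by
          by_contra hgT
          apply hTS
          refine Multiset.le_iff_count.mpr fun a => ?_
          have h := Multiset.le_iff_count.mp hTS' a
          rw [Multiset.count_cons] at h
          by_cases hag : a = g
          · subst hag
            rw [Multiset.count_eq_zero_of_notMem hgT]
            exact Nat.zero_le _
          · simpa [hag] using h
        set V : Multiset G := T.erase g with hV_def
        have hTeq : T = g ::ₘ V := (Multiset.cons_erase hg).symm
        have hVS : V ≤ S := by
          have h := Multiset.erase_le_erase g hTS'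
          rwa [Multiset.erase_cons_head] at h
        have hVsum : V.sum = S.sum := by
          rw [hTeq, Multiset.sum_cons] at hTsum
          have : V.sum = -g := eq_neg_of_add_eq_zero_right hTsum
          rw [this, hg_def, neg_neg]
        have hVcard : Multiset.card V + 1 = Multiset.card T := by
          rw [hTeq, Multiset.card_cons]
        set Z : Multiset G := S - V with hZ_def
        have hsplitZ : Z + V = S := tsub_add_cancel_of_le hVS
        have hZsum : Z.sum = 0 := by
          have h := congrArg Multiset.sum hsplitZ
          rw [Multiset.sum_add, hVsum] at h
          exact add_eq_right.mp h
        have hZcard : Multiset.card Z + Multiset.card V = Multiset.card S := by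
          have := congrArg Multiset.card hsplitZ
          rwa [Multiset.card_add] at this
        have hZge : Dj + 1 ≤ Multiset.card Z := by omega
        -- pick X ≤ Z with card X = Dj
        obtain ⟨X, hXZ, hXcard⟩ : ∃ X : Multiset G, X ≤ Z ∧ Multiset.card X = Dj := by
          refine ⟨(Z.toList.take Dj : List G), ?_, ?_⟩
          · have h1 : (Z.toList.take Dj).Subperm Z.toList :=
              (List.take_sublist _ _).subperm
            have h2 : ((Z.toList.take Dj : List G) : Multiset G) ≤ (Z.toList : Multiset G) :=
              Multiset.coe_le.mpr h1
            rwa [Multiset.coe_toList] at h2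
          · rw [Multiset.coe_card, List.length_take, Multiset.length_toList]
            omega
        obtain ⟨L, hLlen, hLsum, hLmem⟩ := hDjmem X (by rw [hXcard])
        have hLsumZ : L.sum ≤ Z := hLsum.trans hXZ
        have hsplitL : (Z - L.sum) + L.sum = Z := tsub_add_cancel_of_le hLsumZ
        have hLcard : Multiset.card L.sum ≤ Dj := by
          have := Multiset.card_le_card hLsum
          omega
        have hRcard : Multiset.card (Z - L.sum) + Multiset.card L.sum = Multiset.card Z := by
          have := congrArg Multiset.card hsplitL
          rwa [Multiset.card_add] at this
        have hRne : Z - L.sum ≠ 0 := by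
          intro h0
          rw [h0] at hRcard
          simp at hRcard
          omega
        have hRsum : (Z - L.sum).sum = 0 := by
          have := congrArg Multiset.sum hsplitL
          rw [Multiset.sum_add, aux_list_sum_sum_eq_zero L (fun U hU => (hLmem U hU).2)] at this
          rw [hZsum] at this
          simpa using this
        refine ⟨(Z - L.sum) :: L, by simp [hLlen], ?_, ?_⟩
        · rw [List.sum_cons, hsplitL]
          exact tsub_le_self
        · intro U hU
          rcases List.mem_cons.mp hU with h | h
          · subst h; exact ⟨hRne, hRsum⟩
          · exact hLmem U h
  -- now conclude
  by_cases htop : s i = ⊤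
  · rw [htop]
    have h1 : (⊤ : ℕ∞) - 1 = ⊤ := by
      rw [show (1 : ℕ∞) = ((1 : ℕ) : ℕ∞) by norm_cast]
      exact ENat.top_sub_coe 1
    rw [h1]
    exact le_top.trans (le_max_right _ _)
  · lift s i to ℕ using htop with si hsi
    have hmem : (max (Dj + i) (si - 1)) ∈ jDavenportSet G (j + 1) := by
      intro S hS
      refine key S (le_trans (le_max_left _ _) hS) ?_
      have h3 : ((si - 1 : ℕ) : ℕ∞) ≤ ((Multiset.card S : ℕ) : ℕ∞) := by
        exact_mod_cast Nat.cast_le.mpr (le_trans (le_max_right _ _) hS)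
      calc (si : ℕ∞) - 1 = ((si - 1 : ℕ) : ℕ∞) := by
            rw [ENat.coe_sub]; norm_cast
        _ ≤ _ := h3
    have hle : Dj1 ≤ max (Dj + i) (si - 1) := hDj1.2 hmem
    calc (Dj1 : ℕ∞) ≤ ((max (Dj + i) (si - 1) : ℕ) : ℕ∞) := by exact_mod_cast hle
      _ ≤ max ((Dj : ℕ∞) + i) ((si : ℕ∞) - 1) := by
          rcases max_choice (Dj + i) (si - 1) with h | h <;> rw [h]
          · rw [Nat.cast_add]
            exact le_max_left _ _
          · rw [ENat.coe_sub]
            push_cast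
            exact le_max_right _ _
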